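/- Let (G,P) be a left-ordered group, z ∈ P central with z > 1, and G' = {g : ∃n, z^{−n} ≤ g ≤ z^n}. Then G' equals the subgroup of G generated by the interval [1,z], and the natural map [1,z) → G'/z^ℤ is a bijection onto the quotient of G' by the central cyclic subgroup generated by z. -/

import Mathlib

/-- The left-invariant order on a left-ordered group `(G,P)`: `a ≤ b ↔ a⁻¹b ∈ P`. -/
def leP {G : Type*} [Group G] (P : Set G) (a b : G) : Prop := a⁻¹ * b ∈ P

/-- `G' = {g : ∃ n ∈ ℕ, z^{-n} ≤ g ≤ z^n}`. -/
def Gprime {G : Type*} [Group G] (P : Set G) (z : G) : Set G :=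
  {g | ∃ n : ℕ, leP P (z ^ (-(n : ℤ))) g ∧ leP P g (z ^ (n : ℤ))}

/-- The relation on `G` identifying elements differing by an integer power of `z`;
its restriction to `G'` is the quotient `G'/z^ℤ`. -/
def zRel {G : Type*} [Group G] (z : G) (a b : G) : Prop := ∃ k : ℤ, b = z ^ k * a

/-- `G'` is the subgroup generated by `[1,z]`, and `v ↦ class of v` is a bijection
from `[1,z)` onto the image of `G'` in the quotient `G/z^ℤ` (i.e. onto `G'/z^ℤ`). -/
theorem stmt10 (G : Type*) [Group G] (P : Set G)
    (hP1 : ∀ a ∈ P, ∀ b ∈ P, a * b ∈ P)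
    (hP2 : P ∩ P⁻¹ = {1}) (hP3 : P ∪ P⁻¹ = Set.univ)
    (z : G) (hz : z ∈ P) (hz1 : z ≠ 1) (hzc : ∀ g : G, g * z = z * g) :
    ((Subgroup.closure {x : G | leP P 1 x ∧ leP P x z} : Set G) = Gprime P z) ∧
    (Function.Injective
      (fun v : {x : G // leP P 1 x ∧ leP P x z ∧ x ≠ z} => Quot.mk (zRel z) v.1)) ∧
    (Set.range
      (fun v : {x : G // leP P 1 x ∧ leP P x z ∧ x ≠ z} => Quot.mk (zRel z) v.1) =
      Quot.mk (zRel z) '' Gprime P z) := by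
  classical
  -- basic order facts
  have h1P : (1 : G) ∈ P := by
    have : (1 : G) ∈ P ∩ P⁻¹ := by rw [hP2]; rfl
    exact this.1
  have hrefl : ∀ a : G, leP P a a := fun a => by simpa [leP] using h1P
  have htrans : ∀ a b c : G, leP P a b → leP P b c → leP P a c := by
    intro a b c hab hbc
    have := hP1 _ hab _ hbc
    simpa [leP, mul_assoc] using this
  have hantisymm : ∀ a b : G, leP P a b → leP P b a → a = b := by
    intro a b hab hba
    have hm : a⁻¹ * b ∈ P ∩ P⁻¹ := ⟨hab, by simpa [leP, Set.mem_inv, mul_inv_rev] using hba⟩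
    rw [hP2] at hm
    have : a⁻¹ * b = 1 := hm
    have := mul_eq_one_iff_inv_eq.mp this
    simp at this
    exact this
  have htotal : ∀ a b : G, leP P a b ∨ leP P b a := by
    intro a b
    have : a⁻¹ * b ∈ P ∪ P⁻¹ := by rw [hP3]; trivial
    rcases this with h | h
    · exact Or.inl h
    · right; simpa [leP, Set.mem_inv, mul_inv_rev] using h
  have hmul : ∀ c a b : G, leP P a b → leP P (c * a) (c * b) := by
    intro c a b h
    simpa [leP, mul_assoc] using h
  have hzc' : ∀ (k : ℤ) (g : G), g * z ^ k = z ^ k * g :=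
    fun k g => Commute.zpow_right (hzc g) k
  -- powers of z
  have hnpow : ∀ m : ℕ, z ^ m ∈ P := by
    intro m
    induction m with
    | zero => simpa using h1P
    | succ n ih => rw [pow_succ]; exact hP1 _ ih _ hz
  have hnpow_ne : ∀ m : ℕ, 0 < m → z ^ m ≠ 1 := by
    intro m hm h
    obtain ⟨k, rfl⟩ := Nat.exists_eq_succ_of_ne_zero hm.ne'
    rw [pow_succ] at h
    have hk : z ^ k = z⁻¹ := eq_inv_of_mul_eq_one_left h
    have hzinv : z ∈ P ∩ P⁻¹ := ⟨hz, by rw [Set.mem_inv, ← hk]; exact hnpow k⟩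
    rw [hP2] at hzinv
    exact hz1 hzinv
  have hzpow_nonneg : ∀ d : ℤ, 0 ≤ d → z ^ d ∈ P := by
    intro d hd
    obtain ⟨m, rfl⟩ : ∃ m : ℕ, d = (m : ℤ) := ⟨d.toNat, by omega⟩
    rw [zpow_natCast]; exact hnpow m
  have hzpow_pos : ∀ d : ℤ, z ^ d ∈ P → 0 ≤ d := by
    intro d hd
    by_contra h
    push_neg at h
    obtain ⟨m, hm⟩ : ∃ m : ℕ, -d = (m : ℤ) := ⟨(-d).toNat, by omega⟩
    have h1 : z ^ (-d) ∈ P := by rw [hm, zpow_natCast]; exact hnpow m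
    have h2 : z ^ (-d) ∈ P⁻¹ := by
      rw [Set.mem_inv, zpow_neg, inv_inv]; exact hd
    have h3 : z ^ (-d) ∈ P ∩ P⁻¹ := ⟨h1, h2⟩
    rw [hP2] at h3
    have : z ^ (-d) = 1 := h3
    rw [hm, zpow_natCast] at this
    exact hnpow_ne m (by omega) this
  have hzz : ∀ a b : ℤ, leP P (z ^ a) (z ^ b) ↔ a ≤ b := by
    intro a b
    have e : (z ^ a)⁻¹ * z ^ b = z ^ (b - a) := by
      rw [← zpow_neg, ← zpow_add]; ring_nf
    constructor
    · intro h
      have := hzpow_pos _ (by rw [← e]; exact h)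
      omega
    · intro h
      show (z ^ a)⁻¹ * z ^ b ∈ P
      rw [e]; exact hzpow_nonneg _ (by omega)
  -- Gprime is a subgroup
  have hone_mem : (1 : G) ∈ Gprime P z :=
    ⟨0, by simpa [leP] using h1P, by simpa [leP] using h1P⟩
  have hmul_mem : ∀ a b : G, a ∈ Gprime P z → b ∈ Gprime P z → a * b ∈ Gprime P z := by
    rintro a b ⟨n, han, han'⟩ ⟨m, hbm, hbm'⟩
    refine ⟨n + m, ?_, ?_⟩
    · -- z^{-(n+m)} = z^{-m} * z^{-n} ≤ z^{-m} * a = a * z^{-m} ≤ a * b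
      have h1 : leP P (z ^ (-((n + m : ℕ) : ℤ))) (z ^ (-(m : ℤ)) * a) := by
        have := hmul (z ^ (-(m : ℤ))) _ _ han
        have e : z ^ (-(m : ℤ)) * z ^ (-(n : ℤ)) = z ^ (-((n + m : ℕ) : ℤ)) := by
          rw [← zpow_add]; push_cast; ring_nf
        rwa [e] at this
      have h2 : leP P (a * z ^ (-(m : ℤ))) (a * b) := hmul a _ _ hbm
      rw [hzc'] at h2
      exact htrans _ _ _ h1 h2
    · -- a * b ≤ a * z^m = z^m * a ≤ z^m * z^n = z^{n+m}
      have h1 : leP P (a * b) (z ^ (m : ℤ) * a) := by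
        have := hmul a _ _ hbm'
        rwa [hzc'] at this
      have h2 : leP P (z ^ (m : ℤ) * a) (z ^ ((n + m : ℕ) : ℤ)) := by
        have := hmul (z ^ (m : ℤ)) _ _ han'
        have e : z ^ (m : ℤ) * z ^ (n : ℤ) = z ^ ((n + m : ℕ) : ℤ) := by
          rw [← zpow_add]; push_cast; ring_nf
        rwa [e] at this
      exact htrans _ _ _ h1 h2
  have hinv_mem : ∀ a : G, a ∈ Gprime P z → a⁻¹ ∈ Gprime P z := by
    rintro a ⟨n, han, han'⟩
    refine ⟨n, ?_, ?_⟩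
    · -- z^{-n} ≤ a⁻¹  ⟺  z^n * a⁻¹ ∈ P; from a ≤ z^n: a⁻¹ * z^n ∈ P, commute
      show (z ^ (-(n : ℤ)))⁻¹ * a⁻¹ ∈ P
      rw [zpow_neg, inv_inv]
      have : a⁻¹ * z ^ (n : ℤ) ∈ P := han'
      rwa [hzc'] at this
    · -- a⁻¹ ≤ z^n  ⟺  a * z^n ∈ P; from z^{-n} ≤ a: z^n * a ∈ P, commute
      show (a⁻¹)⁻¹ * z ^ (n : ℤ) ∈ P
      rw [inv_inv, hzc']
      have : (z ^ (-(n : ℤ)))⁻¹ * a ∈ P := han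
      rwa [zpow_neg, inv_inv] at this
  let Gsub : Subgroup G :=
    { carrier := Gprime P z
      one_mem' := hone_mem
      mul_mem' := fun ha hb => hmul_mem _ _ ha hb
      inv_mem' := fun ha => hinv_mem _ ha }
  -- key decomposition lemma
  have hdecomp : ∀ g ∈ Gprime P z, ∃ (k : ℤ) (v : G),
      leP P 1 v ∧ leP P v z ∧ v ≠ z ∧ g = z ^ k * v := by
    rintro g ⟨n, hgn, hgn'⟩
    obtain ⟨k, hSk, hkmax⟩ := Int.exists_greatest_of_bdd
      (P := fun k => leP P (z ^ k) g)
      ⟨n, fun j hj => by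
        have := htrans _ _ _ hj hgn'
        exact (hzz j n).mp this⟩
      ⟨-(n : ℤ), hgn⟩
    have hle : leP P g (z ^ (k + 1)) := by
      rcases htotal (z ^ (k + 1)) g with h | h
      · exact absurd (hkmax _ h) (by omega)
      · exact h
    refine ⟨k, z ^ (-k) * g, ?_, ?_, ?_, ?_⟩
    · show (1 : G)⁻¹ * (z ^ (-k) * g) ∈ P
      have : (z ^ k)⁻¹ * g ∈ P := hSk
      rwa [inv_one, one_mul, zpow_neg]
    · show (z ^ (-k) * g)⁻¹ * z ∈ P
      have : g⁻¹ * z ^ (k + 1) ∈ P := hle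
      rw [zpow_add_one] at this
      rwa [mul_inv_rev, zpow_neg, inv_inv, mul_assoc]
    · intro hvz
      have hg : g = z ^ (k + 1) := by
        have : z ^ k * (z ^ (-k) * g) = z ^ k * z := by rw [hvz]
        rw [← mul_assoc, ← zpow_add] at this
        simp at this
        rw [this, ← zpow_add_one]
      have : leP P (z ^ (k + 1)) g := by rw [hg]; exact hrefl _
      exact absurd (hkmax _ this) (by omega)
    · rw [← mul_assoc, ← zpow_add]; simp
  -- the quotient relation is an equivalence
  have hequiv : Equivalence (zRel z) := by
    constructor
    · exact fun a => ⟨0, by simp⟩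
    · rintro a b ⟨k, rfl⟩
      exact ⟨-k, by rw [← mul_assoc, ← zpow_add]; simp⟩
    · rintro a b c ⟨k, rfl⟩ ⟨j, rfl⟩
      exact ⟨j + k, by rw [← mul_assoc, ← zpow_add]⟩
  -- claim used for injectivity
  have hclaim : ∀ v w : G, leP P 1 v → leP P w z → w ≠ z →
      ∀ k : ℤ, w = z ^ k * v → k ≤ 0 := by
    intro v w h1v hwz hwnz k hk
    by_contra h
    push_neg at h
    have hzk : leP P z (z ^ k) := by
      have := (hzz 1 k).mpr (by omega)
      rwa [zpow_one] at this
    have h2 : leP P (z ^ k) w := by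
      have := hmul (z ^ k) _ _ h1v
      rw [mul_one] at this
      rwa [← hk] at this
    have : leP P z w := htrans _ _ _ hzk h2
    exact hwnz (hantisymm _ _ hwz this)
  refine ⟨?_, ?_, ?_⟩
  · -- closure = Gprime
    apply le_antisymm
    · have : Subgroup.closure {x : G | leP P 1 x ∧ leP P x z} ≤ Gsub := by
        rw [Subgroup.closure_le]
        intro x hx
        refine ⟨1, ?_, ?_⟩
        · have h1 : leP P (z ^ (-(1 : ℕ) : ℤ)) 1 := by
            show (z ^ (-(1 : ℕ) : ℤ))⁻¹ * 1 ∈ P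
            rw [mul_one, zpow_neg, inv_inv]
            simpa using hz
          exact htrans _ _ _ h1 hx.1
        · show x⁻¹ * z ^ ((1 : ℕ) : ℤ) ∈ P
          simpa [leP] using hx.2
      exact this
    · intro g hg
      obtain ⟨k, v, h1v, hvz, _, rfl⟩ := hdecomp g hg
      have hzmem : z ∈ Subgroup.closure {x : G | leP P 1 x ∧ leP P x z} :=
        Subgroup.subset_closure ⟨by simpa [leP] using hz, hrefl z⟩
      have hvmem : v ∈ Subgroup.closure {x : G | leP P 1 x ∧ leP P x z} :=
        Subgroup.subset_closure ⟨h1v, hvz⟩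
      exact mul_mem (zpow_mem hzmem k) hvmem
  · -- injectivity
    rintro ⟨v, h1v, hvz, hvnz⟩ ⟨w, h1w, hwz, hwnz⟩ h
    simp only at h
    have hrel : zRel z v w := (Equivalence.eqvGen_iff hequiv).mp (Quot.eq.mp h)
    obtain ⟨k, hk⟩ := hrel
    have hk1 : k ≤ 0 := hclaim v w h1v hwz hwnz k hk
    have hk2 : -k ≤ 0 := by
      refine hclaim w v h1w hvz hvnz (-k) ?_
      rw [hk, ← mul_assoc, ← zpow_add]; simp
    have : k = 0 := by omega
    subst this
    rw [zpow_zero, one_mul] at hk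
    exact Subtype.ext hk.symm
  · -- range = image
    ext q
    constructor
    · rintro ⟨⟨v, h1v, hvz, hvnz⟩, rfl⟩
      refine ⟨v, ⟨1, ?_, ?_⟩, rfl⟩
      · have h1 : leP P (z ^ (-(1 : ℕ) : ℤ)) 1 := by
          show (z ^ (-(1 : ℕ) : ℤ))⁻¹ * 1 ∈ P
          rw [mul_one, zpow_neg, inv_inv]
          simpa using hz
        exact htrans _ _ _ h1 h1v
      · show v⁻¹ * z ^ ((1 : ℕ) : ℤ) ∈ P
        simpa [leP] using hvz
    · rintro ⟨g, hg, rfl⟩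
      obtain ⟨k, v, h1v, hvz, hvnz, rfl⟩ := hdecomp g hg
      refine ⟨⟨v, h1v, hvz, hvnz⟩, ?_⟩
      exact Quot.sound ⟨k, rfl⟩
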